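/- Let R = k[x_0, x_1, x_2] and I = l·H where l is a linear form and H is an ideal generated by a regular sequence of 3 forms each of degree d_1 − 1 (with d_1 ≥ 2). Then reg(R/I) = 3d_1 − 5. -/

import Mathlib

/-!
STATEMENT 0: If `I` is a homogeneous ideal in `R = k[x₀,…,xₙ]` generated by a regular
sequence of homogeneous forms of degrees `d₁,…,d_r`, then the Castelnuovo–Mumford
regularity of `R/I` equals `(d₁-1)+⋯+(d_r-1)`.

We define the Castelnuovo–Mumford regularity of `R/I` via graded free resolutions:
`reg (R/I) ≤ m` iff there is a graded free resolution `⋯ → ⊕ R(-d_{i,j}) → ⋯ → R → R/I → 0`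
with all `d_{i,j} ≤ m + i`, and `reg (R/I)` is the least such `m` (this agrees with the
definition via a minimal resolution, since the minimal resolution is a direct summand of
any graded free resolution).
-/

open MvPolynomial

variable {k : Type} [Field k] {n : ℕ}

/-- A graded free resolution of `R/I`, encoded by matrices of homogeneous polynomials:
`F i = ⊕_{j : Fin (b i)} R(- D i j)`, with `F 0 = R` (so `b 0 = 1`, `D 0 = 0`);
the map `F (i+1) → F i` is given by the matrix `A i`, whose `(j,j')` entry is
homogeneous of degree `D (i+1) j' - D i j`; the complex is exact in positive degrees
and the image of `F 1 → F 0 = R` is `I`, so that the cokernel of the augmented complex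
is `R/I`. -/
structure GradedFreeResolution (I : Ideal (MvPolynomial (Fin (n + 1)) k)) where
  b : ℕ → ℕ
  hb0 : b 0 = 1
  D : (i : ℕ) → Fin (b i) → ℕ
  hD0 : ∀ j, D 0 j = 0
  A : (i : ℕ) → Matrix (Fin (b i)) (Fin (b (i + 1))) (MvPolynomial (Fin (n + 1)) k)
  homog : ∀ i (j : Fin (b i)) (j' : Fin (b (i + 1))),
    A i j j' = 0 ∨ (D i j ≤ D (i + 1) j' ∧ (A i j j').IsHomogeneous (D (i + 1) j' - D i j))
  exact : ∀ i, LinearMap.range ((A (i + 1)).mulVecLin) = LinearMap.ker ((A i).mulVecLin)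
  augment : Submodule.map
      (LinearMap.proj (R := MvPolynomial (Fin (n + 1)) k)
        (φ := fun _ : Fin (b 0) => MvPolynomial (Fin (n + 1)) k)
        ⟨0, hb0 ▸ Nat.zero_lt_one⟩)
      (LinearMap.range ((A 0).mulVecLin)) = I

/-- `reg R/I ≤ m` iff some graded free resolution of `R/I` has all twists `d_{i,j} ≤ m + i`. -/
def regQuotLE (I : Ideal (MvPolynomial (Fin (n + 1)) k)) (m : ℤ) : Prop :=
  ∃ F : GradedFreeResolution I, ∀ (i : ℕ) (j : Fin (F.b i)), (F.D i j : ℤ) ≤ m + i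

/-- The Castelnuovo–Mumford regularity of `R/I`. -/
noncomputable def regQuot (I : Ideal (MvPolynomial (Fin (n + 1)) k)) : ℤ :=
  sInf {m : ℤ | regQuotLE I m}


section RegHelpers

lemma hc_mul {p q : MvPolynomial (Fin 3) k} {δ : ℕ} (hp : p.IsHomogeneous δ) (n : ℕ) :
    homogeneousComponent n (p * q) =
      if δ ≤ n then p * homogeneousComponent (n - δ) q else 0 := by
  classical
  conv_lhs => rw [← sum_homogeneousComponent q, Finset.mul_sum, map_sum]
  have hterm : ∀ i ∈ Finset.range (q.totalDegree + 1),
      homogeneousComponent n (p * homogeneousComponent i q)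
        = if n = δ + i then p * homogeneousComponent i q else 0 := by
    intro i _
    exact homogeneousComponent_of_mem
      ((hp.mul (homogeneousComponent_isHomogeneous i q)))
  rw [Finset.sum_congr rfl hterm]
  by_cases hδ : δ ≤ n
  · have hcond : ∀ i, (n = δ + i) ↔ (i = n - δ) := by omega
    simp_rw [hcond]
    rw [Finset.sum_ite_eq' (Finset.range (q.totalDegree + 1)) (n - δ)
      (fun i => p * homogeneousComponent i q)]
    rw [if_pos hδ]
    by_cases hmem : n - δ ∈ Finset.range (q.totalDegree + 1)
    · rw [if_pos hmem]
    · rw [if_neg hmem]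
      have : homogeneousComponent (n - δ) q = 0 := by
        apply homogeneousComponent_eq_zero
        simp only [Finset.mem_range] at hmem
        omega
      rw [this, mul_zero]
  · rw [if_neg hδ]
    apply Finset.sum_eq_zero
    intro i _
    rw [if_neg (by omega)]

/-- `v` is homogeneous of internal degree `d` in the twisted free module with twists `a`. -/
def Hm {σ : Type} (a : σ → ℕ) (d : ℕ) (v : σ → MvPolynomial (Fin 3) k) : Prop :=
  ∀ s, v s = 0 ∨ (a s ≤ d ∧ (v s).IsHomogeneous (d - a s))

/-- A matrix all of whose columns are homogeneous: a graded map `⊕R(-c t) → ⊕R(-a s)`. -/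
def GradedMat {σ τ : Type} (B : Matrix σ τ (MvPolynomial (Fin 3) k))
    (a : σ → ℕ) (c : τ → ℕ) : Prop :=
  ∀ t, Hm a (c t) (fun s => B s t)

lemma Hm.mulVec {σ τ : Type} [Fintype τ] {B : Matrix σ τ (MvPolynomial (Fin 3) k)}
    {a : σ → ℕ} {c : τ → ℕ} (hB : GradedMat B a c) {d : ℕ} {v : τ → MvPolynomial (Fin 3) k}
    (hv : Hm c d v) : Hm a d (B.mulVec v) := by
  intro s
  by_cases had : a s ≤ d
  · right
    refine ⟨had, ?_⟩
    rw [show (B.mulVec v) s = ∑ t, B s t * v t from rfl]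
    rw [← mem_homogeneousSubmodule]
    apply Submodule.sum_mem
    intro t _
    rcases hB t s with hB0 | ⟨hac, hBh⟩
    · rw [show B s t = 0 from hB0, zero_mul]; exact Submodule.zero_mem _
    rcases hv t with hv0 | ⟨hcd, hvh⟩
    · rw [hv0, mul_zero]; exact Submodule.zero_mem _
    rw [mem_homogeneousSubmodule]
    have := hBh.mul hvh
    rwa [show c t - a s + (d - c t) = d - a s by omega] at this
  · left
    rw [show (B.mulVec v) s = ∑ t, B s t * v t from rfl]
    apply Finset.sum_eq_zero
    intro t _
    rcases hB t s with hB0 | ⟨hac, _⟩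
    · rw [show B s t = 0 from hB0, zero_mul]
    rcases hv t with hv0 | ⟨hcd, _⟩
    · rw [hv0, mul_zero]
    omega

/-- Homogeneous-component truncation of a vector in a twisted free module. -/
noncomputable def compVec {σ : Type} (a : σ → ℕ) (d : ℕ) (v : σ → MvPolynomial (Fin 3) k) :
    σ → MvPolynomial (Fin 3) k :=
  fun s => if a s ≤ d then homogeneousComponent (d - a s) (v s) else 0

lemma Hm_compVec {σ : Type} (a : σ → ℕ) (d : ℕ) (v : σ → MvPolynomial (Fin 3) k) :
    Hm a d (compVec a d v) := by
  intro s
  unfold compVec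
  by_cases hs : a s ≤ d
  · right; rw [if_pos hs]; exact ⟨hs, homogeneousComponent_isHomogeneous _ _⟩
  · left; rw [if_neg hs]

lemma compVec_eq_self {σ : Type} {a : σ → ℕ} {d : ℕ} {v : σ → MvPolynomial (Fin 3) k}
    (hv : Hm a d v) : compVec a d v = v := by
  funext s
  unfold compVec
  rcases hv s with hv0 | ⟨hle, hh⟩
  · rw [hv0, map_zero]
    split <;> rfl
  · rw [if_pos hle, homogeneousComponent_of_mem hh, if_pos rfl]

lemma mulVec_compVec {σ τ : Type} [Fintype τ] {B : Matrix σ τ (MvPolynomial (Fin 3) k)}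
    {a : σ → ℕ} {c : τ → ℕ} (hB : GradedMat B a c) (d : ℕ) (v : τ → MvPolynomial (Fin 3) k) :
    B.mulVec (compVec c d v) = compVec a d (B.mulVec v) := by
  funext s
  rw [show (B.mulVec (compVec c d v)) s = ∑ t, B s t * compVec c d v t from rfl]
  unfold compVec
  by_cases had : a s ≤ d
  · rw [if_pos had]
    rw [show (B.mulVec v) s = ∑ t, B s t * v t from rfl, map_sum]
    apply Finset.sum_congr rfl
    intro t _
    rcases hB t s with hB0 | ⟨hac, hBh⟩
    · rw [show B s t = 0 from hB0, zero_mul, zero_mul, map_zero]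
    · rw [hc_mul hBh]
      by_cases hcd : c t ≤ d
      · rw [if_pos hcd, if_pos (by omega : c t - a s ≤ d - a s),
          show d - a s - (c t - a s) = d - c t by omega]
      · rw [if_neg hcd, if_neg (by omega : ¬ c t - a s ≤ d - a s), mul_zero]
  · rw [if_neg had]
    apply Finset.sum_eq_zero
    intro t _
    rcases hB t s with hB0 | ⟨hac, _⟩
    · rw [show B s t = 0 from hB0, zero_mul]
    · rw [if_neg (by omega : ¬ c t ≤ d), mul_zero]

lemma exists_graded_preimage {σ τ : Type} [Fintype τ]
    {B : Matrix σ τ (MvPolynomial (Fin 3) k)} {a : σ → ℕ} {c : τ → ℕ}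
    (hB : GradedMat B a c) {d : ℕ} {w : σ → MvPolynomial (Fin 3) k} (hw : Hm a d w)
    (hmem : w ∈ LinearMap.range B.mulVecLin) :
    ∃ v, Hm c d v ∧ B.mulVec v = w := by
  obtain ⟨u, hu⟩ := hmem
  refine ⟨compVec c d u, Hm_compVec _ _ _, ?_⟩
  rw [mulVec_compVec hB]
  rw [Matrix.mulVecLin_apply] at hu
  rw [hu, compVec_eq_self hw]

lemma col_mul {σ τ ρ : Type} [Fintype τ] (B : Matrix σ τ (MvPolynomial (Fin 3) k))
    (C : Matrix τ ρ (MvPolynomial (Fin 3) k)) (j : ρ) :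
    (fun s => (B * C) s j) = B.mulVec (fun t => C t j) := by
  funext s
  simp [Matrix.mul_apply, Matrix.mulVec, dotProduct]

lemma exists_factor {σ τ ρ : Type} [Fintype τ]
    {B : Matrix σ τ (MvPolynomial (Fin 3) k)} {X : Matrix σ ρ (MvPolynomial (Fin 3) k)}
    (hX : ∀ j, (fun s => X s j) ∈ LinearMap.range B.mulVecLin) :
    ∃ C : Matrix τ ρ (MvPolynomial (Fin 3) k), B * C = X := by
  choose v hv using hX
  refine ⟨Matrix.of fun t j => v j t, ?_⟩
  refine Matrix.ext fun s j => ?_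
  have := congrFun (hv j) s
  rw [Matrix.mulVecLin_apply] at this
  rw [show B.mulVec (v j) s = ∑ t, B s t * v j t from rfl] at this
  rw [Matrix.mul_apply]
  exact this

lemma exists_graded_factor {σ τ ρ : Type} [Fintype τ]
    {B : Matrix σ τ (MvPolynomial (Fin 3) k)} {a : σ → ℕ} {c : τ → ℕ}
    (hB : GradedMat B a c) (dd : ρ → ℕ) {X : Matrix σ ρ (MvPolynomial (Fin 3) k)}
    (hX : ∀ j, Hm a (dd j) (fun s => X s j) ∧
      (fun s => X s j) ∈ LinearMap.range B.mulVecLin) :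
    ∃ C : Matrix τ ρ (MvPolynomial (Fin 3) k), B * C = X ∧ GradedMat C c dd := by
  have h' : ∀ j, ∃ v, Hm c (dd j) v ∧ B.mulVec v = (fun s => X s j) :=
    fun j => exists_graded_preimage hB (hX j).1 (hX j).2
  choose v hv1 hv2 using h'
  refine ⟨Matrix.of fun t j => v j t, ?_, ?_⟩
  · refine Matrix.ext fun s j => ?_
    have := congrFun (hv2 j) s
    rw [show B.mulVec (v j) s = ∑ t, B s t * v j t from rfl] at this
    rw [Matrix.mul_apply]
    exact this
  · intro j
    exact hv1 j

section Koszul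

variable (l : MvPolynomial (Fin 3) k) (h : Fin 3 → MvPolynomial (Fin 3) k)

noncomputable def G1 : Matrix (Fin 1) (Fin 3) (MvPolynomial (Fin 3) k) :=
  Matrix.of ![![l * h 0, l * h 1, l * h 2]]

noncomputable def G2 : Matrix (Fin 3) (Fin 3) (MvPolynomial (Fin 3) k) :=
  Matrix.of ![![-h 1, -h 2, 0], ![h 0, 0, -h 2], ![0, h 0, h 1]]

noncomputable def G3 : Matrix (Fin 3) (Fin 1) (MvPolynomial (Fin 3) k) :=
  Matrix.of ![![h 2], ![-h 1], ![h 0]]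

lemma G1_mulVec (v : Fin 3 → MvPolynomial (Fin 3) k) :
    (G1 l h).mulVec v = fun _ => l * h 0 * v 0 + l * h 1 * v 1 + l * h 2 * v 2 := by
  funext s
  fin_cases s <;>
  simp [G1, Matrix.mulVec, dotProduct, Fin.sum_univ_three]

lemma G2_mulVec (v : Fin 3 → MvPolynomial (Fin 3) k) :
    (G2 h).mulVec v = ![-(h 1) * v 0 + -(h 2) * v 1, h 0 * v 0 + -(h 2) * v 2,
      h 0 * v 1 + h 1 * v 2] := by
  funext s
  fin_cases s <;>
  simp [G2, Matrix.mulVec, dotProduct, Fin.sum_univ_three] <;> ring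

lemma G3_mulVec (v : Fin 1 → MvPolynomial (Fin 3) k) :
    (G3 h).mulVec v = ![h 2 * v 0, -(h 1) * v 0, h 0 * v 0] := by
  funext s
  fin_cases s <;>
  simp [G3, Matrix.mulVec, dotProduct, Fin.sum_univ_one]

lemma hG12 : G1 l h * G2 h = 0 := by
  refine Matrix.ext fun s t => ?_
  fin_cases s <;> fin_cases t <;>
  · simp [G1, G2, Matrix.mul_apply, Fin.sum_univ_three]
    ring

lemma hG23 : G2 h * G3 h = 0 := by
  refine Matrix.ext fun s t => ?_
  fin_cases s <;> fin_cases t <;>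
  · simp [G2, G3, Matrix.mul_apply, Fin.sum_univ_three]
    ring

end Koszul

section Exact

variable {l : MvPolynomial (Fin 3) k} {h : Fin 3 → MvPolynomial (Fin 3) k}
variable (hl0 : l ≠ 0) (hne0 : h 0 ≠ 0)
variable (hr1 : ∀ x : MvPolynomial (Fin 3) k, x * h 1 ∈ Ideal.span {h 0} → x ∈ Ideal.span {h 0})
variable (hr2 : ∀ x : MvPolynomial (Fin 3) k,
  x * h 2 ∈ Ideal.span {h 0, h 1} → x ∈ Ideal.span {h 0, h 1})

include hl0 hne0 hr1 hr2 in
lemma E1core (v : Fin 3 → MvPolynomial (Fin 3) k) (hv : (G1 l h).mulVec v = 0) :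
    ∃ u : Fin 3 → MvPolynomial (Fin 3) k, (G2 h).mulVec u = v := by
  have h0 := congrFun hv 0
  rw [G1_mulVec] at h0
  simp only [Pi.zero_apply] at h0
  have hsum : h 0 * v 0 + h 1 * v 1 + h 2 * v 2 = 0 := by
    have : l * (h 0 * v 0 + h 1 * v 1 + h 2 * v 2) = 0 := by linear_combination h0
    rcases mul_eq_zero.mp this with hc | hc
    · exact absurd hc hl0
    · exact hc
  have hv2mem : v 2 * h 2 ∈ Ideal.span {h 0, h 1} := by
    refine Submodule.mem_span_pair.mpr ⟨-(v 0), -(v 1), ?_⟩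
    simp only [smul_eq_mul]
    linear_combination -hsum
  obtain ⟨a, b, hab⟩ := Submodule.mem_span_pair.mp (hr2 _ hv2mem)
  simp only [smul_eq_mul] at hab
  have hb1 : (v 1 + b * h 2) * h 1 ∈ Ideal.span {h 0} := by
    refine Ideal.mem_span_singleton'.mpr ⟨-(v 0 + a * h 2), ?_⟩
    linear_combination -hsum - h 2 * hab
  obtain ⟨w, hw⟩ := Ideal.mem_span_singleton'.mp (hr1 _ hb1)
  have hv0 : v 0 = -(w) * h 1 + -(a) * h 2 := by
    have hcan : h 0 * (v 0 + w * h 1 + a * h 2) = 0 := by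
      linear_combination hsum + h 1 * hw + h 2 * hab
    rcases mul_eq_zero.mp hcan with hc | hc
    · exact absurd hc hne0
    · linear_combination hc
  refine ⟨![w, a, b], ?_⟩
  rw [G2_mulVec]
  funext s
  fin_cases s <;> simp
  · linear_combination -hv0
  · linear_combination hw
  · linear_combination hab

include hne0 hr1 in
lemma E2core (u : Fin 3 → MvPolynomial (Fin 3) k) (hu : (G2 h).mulVec u = 0) :
    ∃ t : Fin 1 → MvPolynomial (Fin 3) k, (G3 h).mulVec t = u := by
  rw [G2_mulVec] at hu
  have e0 := congrFun hu 0
  have e1 := congrFun hu 1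
  have e2 := congrFun hu 2
  simp only [Pi.zero_apply, Matrix.cons_val_zero, Matrix.cons_val_one, Matrix.head_cons,
    Matrix.cons_val_two, Matrix.tail_cons] at e0 e1 e2
  -- e2 : h 0 * u 1 + h 1 * u 2 = 0
  have hmem : u 2 * h 1 ∈ Ideal.span {h 0} := by
    refine Ideal.mem_span_singleton'.mpr ⟨-(u 1), ?_⟩
    linear_combination -e2
  obtain ⟨t, ht⟩ := Ideal.mem_span_singleton'.mp (hr1 _ hmem)
  -- ht : t * h 0 = u 2
  have hu1 : u 1 = -t * h 1 := by
    have : h 0 * (u 1 + t * h 1) = 0 := by linear_combination e2 + h 1 * ht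
    rcases mul_eq_zero.mp this with hc | hc
    · exact absurd hc hne0
    · linear_combination hc
  have hu0 : u 0 = t * h 2 := by
    have : h 0 * (u 0 - t * h 2) = 0 := by linear_combination e1 - h 2 * ht
    rcases mul_eq_zero.mp this with hc | hc
    · exact absurd hc hne0
    · linear_combination hc
  refine ⟨fun _ => t, ?_⟩
  rw [G3_mulVec]
  funext s
  fin_cases s <;> simp
  · linear_combination -hu0
  · linear_combination -hu1
  · linear_combination ht

include hne0 in
lemma E3core (t : Fin 1 → MvPolynomial (Fin 3) k) (ht : (G3 h).mulVec t = 0) : t = 0 := by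
  rw [G3_mulVec] at ht
  have e2 := congrFun ht 2
  simp only [Pi.zero_apply, Matrix.cons_val_two, Matrix.tail_cons, Matrix.head_cons] at e2
  rcases mul_eq_zero.mp e2 with hc | hc
  · exact absurd hc hne0
  · funext s
    fin_cases s
    exact hc
end Exact

section Graded

variable {e : ℕ} {l : MvPolynomial (Fin 3) k} {h : Fin 3 → MvPolynomial (Fin 3) k}

lemma Hneg {p : MvPolynomial (Fin 3) k} {m : ℕ} (hp : p.IsHomogeneous m) :
    (-p).IsHomogeneous m := by
  rw [← mem_homogeneousSubmodule] at hp ⊢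
  exact neg_mem hp

variable (hl : l.IsHomogeneous 1) (hh : ∀ i, (h i).IsHomogeneous e)

include hl hh in
lemma gm1 : GradedMat (G1 l h) (fun _ => 0) (fun _ => e + 1) := by
  intro t s
  show G1 l h s t = 0 ∨ (0 ≤ e + 1 ∧ (G1 l h s t).IsHomogeneous (e + 1 - 0))
  right
  refine ⟨Nat.zero_le _, ?_⟩
  have base : ∀ i, (l * h i).IsHomogeneous (e + 1 - 0) := by
    intro i
    have := hl.mul (hh i)
    rwa [show 1 + e = e + 1 - 0 by omega] at this
  fin_cases s <;> fin_cases t <;> simpa [G1] using base _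

include hh in
lemma gm2 : GradedMat (G2 h) (fun _ => e + 1) (fun _ => 2 * e + 1) := by
  intro t s
  show G2 h s t = 0 ∨ (e + 1 ≤ 2 * e + 1 ∧ (G2 h s t).IsHomogeneous (2 * e + 1 - (e + 1)))
  right
  refine ⟨by omega, ?_⟩
  have hd : 2 * e + 1 - (e + 1) = e := by omega
  rw [hd]
  fin_cases s <;> fin_cases t <;> simp [G2] <;>
    first
      | exact isHomogeneous_zero _ _ _
      | exact hh _
      | exact Hneg (hh _)

include hh in
lemma gm3 : GradedMat (G3 h) (fun _ => 2 * e + 1) (fun _ => 3 * e + 1) := by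
  intro t s
  show G3 h s t = 0 ∨ (2 * e + 1 ≤ 3 * e + 1 ∧ (G3 h s t).IsHomogeneous (3 * e + 1 - (2 * e + 1)))
  right
  refine ⟨by omega, ?_⟩
  have hd : 3 * e + 1 - (2 * e + 1) = e := by omega
  rw [hd]
  fin_cases s <;> fin_cases t <;> simp [G3] <;>
    first
      | exact isHomogeneous_zero _ _ _
      | exact hh _
      | exact Hneg (hh _)

end Graded

section RangeSpan

variable {l : MvPolynomial (Fin 3) k} {h : Fin 3 → MvPolynomial (Fin 3) k}

lemma mem_range_G1_iff (w : Fin 1 → MvPolynomial (Fin 3) k) :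
    w ∈ LinearMap.range (G1 l h).mulVecLin ↔
      w 0 ∈ Ideal.span (Set.range fun i => l * h i) := by
  constructor
  · rintro ⟨c, rfl⟩
    rw [Matrix.mulVecLin_apply, G1_mulVec]
    refine Submodule.mem_span_range_iff_exists_fun _ |>.mpr ⟨c, ?_⟩
    simp only [smul_eq_mul, Fin.sum_univ_three]
    ring
  · intro hw
    obtain ⟨c, hc⟩ := Submodule.mem_span_range_iff_exists_fun _ |>.mp hw
    refine ⟨c, ?_⟩
    rw [Matrix.mulVecLin_apply, G1_mulVec]
    funext s
    have hs : s = 0 := Subsingleton.elim s 0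
    rw [hs, ← hc]
    simp only [smul_eq_mul, Fin.sum_univ_three]
    ring

lemma span_lh_eq :
    Ideal.span {l} * Ideal.span (Set.range h) = Ideal.span (Set.range fun i => l * h i) := by
  rw [Ideal.span_mul_span']
  congr 1
  ext x
  constructor
  · rintro ⟨a, ha, b, ⟨i, rfl⟩, rfl⟩
    rcases Set.mem_singleton_iff.mp ha
    exact ⟨i, rfl⟩
  · rintro ⟨i, rfl⟩
    exact ⟨l, rfl, h i, ⟨i, rfl⟩, rfl⟩

end RangeSpan

section RegFacts

lemma reg_mem (J : Ideal (MvPolynomial (Fin 3) k)) (r : MvPolynomial (Fin 3) k)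
    (hr : IsSMulRegular ((MvPolynomial (Fin 3) k) ⧸
      (J • (⊤ : Submodule (MvPolynomial (Fin 3) k) (MvPolynomial (Fin 3) k)))) r)
    {x : MvPolynomial (Fin 3) k} (hx : x * r ∈ J) : x ∈ J := by
  have hJ : (J • (⊤ : Submodule (MvPolynomial (Fin 3) k) (MvPolynomial (Fin 3) k))) = J := by
    rw [← Ideal.span_eq J, Submodule.span_smul_eq, Submodule.set_smul_top_eq_span, Ideal.span_eq]
  have hmk0 : (Submodule.Quotient.mk (r • x) :
      (MvPolynomial (Fin 3) k) ⧸ (J • (⊤ : Submodule (MvPolynomial (Fin 3) k) (MvPolynomial (Fin 3) k)))) = 0 := by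
    rw [Submodule.Quotient.mk_eq_zero, hJ, smul_eq_mul, mul_comm]
    exact hx
  have hmk : r • (Submodule.Quotient.mk x :
      (MvPolynomial (Fin 3) k) ⧸ (J • (⊤ : Submodule (MvPolynomial (Fin 3) k) (MvPolynomial (Fin 3) k))))
      = r • (0 : (MvPolynomial (Fin 3) k) ⧸ (J • (⊤ : Submodule (MvPolynomial (Fin 3) k) (MvPolynomial (Fin 3) k)))) := by
    rw [smul_zero, ← Submodule.Quotient.mk_smul]
    exact hmk0
  have := hr hmk
  rw [Submodule.Quotient.mk_eq_zero, hJ] at this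
  exact this

variable {h : Fin 3 → MvPolynomial (Fin 3) k}
variable (hreg : RingTheory.Sequence.IsRegular (MvPolynomial (Fin 3) k) (List.ofFn h))

include hreg

lemma hfact0 : h 0 ≠ 0 := by
  have hlist : List.ofFn h = [h 0, h 1, h 2] := by
    simp [List.ofFn_succ]
  rw [hlist] at hreg
  have hsr := hreg.toIsWeaklyRegular.regular_mod_prev 0 (by norm_num)
  have e0 : Ideal.ofList (List.take 0 [h 0, h 1, h 2]) = (⊥ : Ideal (MvPolynomial (Fin 3) k)) := by
    simp
  rw [e0] at hsr
  simp only [List.getElem_cons_zero] at hsr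
  intro h0
  have h1 : (1 : MvPolynomial (Fin 3) k) ∈ (⊥ : Ideal (MvPolynomial (Fin 3) k)) := by
    refine reg_mem _ _ hsr ?_
    rw [h0, mul_zero]
    exact Submodule.zero_mem _
  rw [Ideal.mem_bot] at h1
  exact one_ne_zero h1

lemma hfact1 : ∀ x : MvPolynomial (Fin 3) k,
    x * h 1 ∈ Ideal.span {h 0} → x ∈ Ideal.span {h 0} := by
  have hlist : List.ofFn h = [h 0, h 1, h 2] := by
    simp [List.ofFn_succ]
  rw [hlist] at hreg
  have hsr := hreg.toIsWeaklyRegular.regular_mod_prev 1 (by norm_num)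
  have e1 : Ideal.ofList (List.take 1 [h 0, h 1, h 2]) = Ideal.span {h 0} := by
    refine congrArg Ideal.span (Set.ext fun x => ?_)
    simp
  rw [e1] at hsr
  simp only [List.getElem_cons_succ, List.getElem_cons_zero] at hsr
  exact fun x hx => reg_mem _ _ hsr hx

lemma hfact2 : ∀ x : MvPolynomial (Fin 3) k,
    x * h 2 ∈ Ideal.span {h 0, h 1} → x ∈ Ideal.span {h 0, h 1} := by
  have hlist : List.ofFn h = [h 0, h 1, h 2] := by
    simp [List.ofFn_succ]
  rw [hlist] at hreg
  have hsr := hreg.toIsWeaklyRegular.regular_mod_prev 2 (by norm_num)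
  have e2 : Ideal.ofList (List.take 2 [h 0, h 1, h 2]) = Ideal.span {h 0, h 1} := by
    refine congrArg Ideal.span (Set.ext fun x => ?_)
    simp
  rw [e2] at hsr
  simp only [List.getElem_cons_succ, List.getElem_cons_zero] at hsr
  exact fun x hx => reg_mem _ _ hsr hx

end RegFacts

end RegHelpers

section RegHelpers2

section Resolution

variable (e : ℕ) (l : MvPolynomial (Fin 3) k) (h : Fin 3 → MvPolynomial (Fin 3) k)

def bG : ℕ → ℕ
  | 0 => 1
  | 1 => 3
  | 2 => 3
  | 3 => 1
  | _ + 4 => 0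

def DG : (i : ℕ) → Fin (bG i) → ℕ
  | 0 => fun _ => 0
  | 1 => fun _ => e + 1
  | 2 => fun _ => 2 * e + 1
  | 3 => fun _ => 3 * e + 1
  | _ + 4 => fun j => j.elim0

noncomputable def AG : (i : ℕ) → Matrix (Fin (bG i)) (Fin (bG (i + 1))) (MvPolynomial (Fin 3) k)
  | 0 => G1 l h
  | 1 => G2 h
  | 2 => G3 h
  | 3 => fun _ j => j.elim0
  | _ + 4 => fun j _ => j.elim0

variable {e l h}

lemma subsing_submodule_eq {p q : Submodule (MvPolynomial (Fin 3) k)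
    (Fin 0 → MvPolynomial (Fin 3) k)} : p = q := by
  ext x
  rw [Subsingleton.elim x 0]
  exact iff_of_true (zero_mem p) (zero_mem q)

variable (he : 1 ≤ e) (hl : l.IsHomogeneous 1) (hh : ∀ i, (h i).IsHomogeneous e)
  (hl0 : l ≠ 0) (hne0 : h 0 ≠ 0)
  (hr1 : ∀ x : MvPolynomial (Fin 3) k, x * h 1 ∈ Ideal.span {h 0} → x ∈ Ideal.span {h 0})
  (hr2 : ∀ x : MvPolynomial (Fin 3) k,
    x * h 2 ∈ Ideal.span {h 0, h 1} → x ∈ Ideal.span {h 0, h 1})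

include he hl hh hl0 hne0 hr1 hr2 in
theorem upper_bound (I : Ideal (MvPolynomial (Fin 3) k))
    (hI : I = Ideal.span (Set.range fun i => l * h i)) :
    regQuotLE (n := 2) I (3 * (e : ℤ) - 2) := by
  refine ⟨{ b := bG, hb0 := rfl, D := DG e, hD0 := fun j => rfl, A := AG l h,
            homog := ?_, exact := ?_, augment := ?_ }, ?_⟩
  · intro i j j'
    match i with
    | 0 => exact gm1 hl hh j' j
    | 1 => exact gm2 hh j' j
    | 2 => exact gm3 hh j' j
    | 3 => exact j'.elim0
    | i + 4 => exact j.elim0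
  · intro i
    match i with
    | 0 =>
      apply le_antisymm
      · rintro v ⟨u, rfl⟩
        exact (show ∀ u' : Fin 3 → MvPolynomial (Fin 3) k, (G1 l h).mulVec ((G2 h).mulVec u') = 0
          from fun u' => by rw [Matrix.mulVec_mulVec, hG12, Matrix.zero_mulVec]) u
      · intro v hv
        obtain ⟨u, hu⟩ := E1core hl0 hne0 hr1 hr2 v hv
        exact ⟨u, hu⟩
    | 1 =>
      apply le_antisymm
      · rintro v ⟨u, rfl⟩
        exact (show ∀ u' : Fin 1 → MvPolynomial (Fin 3) k, (G2 h).mulVec ((G3 h).mulVec u') = 0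
          from fun u' => by rw [Matrix.mulVec_mulVec, hG23, Matrix.zero_mulVec]) u
      · intro v hv
        obtain ⟨u, hu⟩ := E2core hne0 hr1 v hv
        exact ⟨u, hu⟩
    | 2 =>
      haveI : IsEmpty (Fin (bG (3 + 1))) := by
        rw [show bG (3 + 1) = 0 from rfl]
        infer_instance
      have h1 : LinearMap.range ((AG l h 3).mulVecLin) = ⊥ := by
        rw [LinearMap.range_eq_bot]
        apply LinearMap.ext
        intro u
        rw [Subsingleton.elim u 0, map_zero]
        simp
      rw [h1]
      symm
      rw [eq_bot_iff]
      intro v hv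
      have := E3core hne0 v hv
      rw [this]; exact Submodule.zero_mem _
    | i + 3 => exact subsing_submodule_eq
  · rw [hI]
    apply le_antisymm
    · rintro x ⟨v, hv, rfl⟩
      exact (mem_range_G1_iff _).mp hv
    · intro x hx
      exact ⟨fun _ => x, (mem_range_G1_iff _).mpr hx, rfl⟩
  · intro i j
    match i with
    | 0 => show ((0 : ℕ) : ℤ) ≤ _; push_cast; omega
    | 1 => show ((e + 1 : ℕ) : ℤ) ≤ _; push_cast; omega
    | 2 => show ((2 * e + 1 : ℕ) : ℤ) ≤ _; push_cast; omega
    | 3 => show ((3 * e + 1 : ℕ) : ℤ) ≤ _; push_cast; omega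
    | i + 4 => exact j.elim0

end Resolution

lemma col_eq_mulVec_single {σ τ : Type} [Fintype τ] [DecidableEq τ]
    (B : Matrix σ τ (MvPolynomial (Fin 3) k)) (j : τ) :
    (fun s => B s j) = B.mulVec (Pi.single j 1) := by
  rw [Matrix.mulVec_single]
  funext s
  simp

lemma col_mem_range {σ τ : Type} [Fintype τ] [DecidableEq τ]
    (B : Matrix σ τ (MvPolynomial (Fin 3) k)) (j : τ) :
    (fun s => B s j) ∈ LinearMap.range B.mulVecLin :=
  ⟨Pi.single j 1, by rw [Matrix.mulVecLin_apply, ← col_eq_mulVec_single]⟩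

section Lower

variable {e : ℕ} {l : MvPolynomial (Fin 3) k} {h : Fin 3 → MvPolynomial (Fin 3) k}
variable (he : 1 ≤ e) (hl : l.IsHomogeneous 1) (hh : ∀ i, (h i).IsHomogeneous e)
  (hl0 : l ≠ 0) (hne0 : h 0 ≠ 0)
  (hr1 : ∀ x : MvPolynomial (Fin 3) k, x * h 1 ∈ Ideal.span {h 0} → x ∈ Ideal.span {h 0})
  (hr2 : ∀ x : MvPolynomial (Fin 3) k,
    x * h 2 ∈ Ideal.span {h 0, h 1} → x ∈ Ideal.span {h 0, h 1})

include he hl hh hl0 hne0 hr1 hr2 in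
theorem lower_bound (I : Ideal (MvPolynomial (Fin 3) k))
    (hI : I = Ideal.span (Set.range fun i => l * h i)) (m : ℤ)
    (hm : regQuotLE (n := 2) I m) : 3 * (e : ℤ) - 2 ≤ m := by
  classical
  by_contra hcon
  push_neg at hcon
  obtain ⟨F, hF⟩ := hm
  -- basic index bookkeeping in degree 0
  set j₀ : Fin (F.b 0) := ⟨0, F.hb0 ▸ Nat.zero_lt_one⟩ with hj₀
  have huniq : ∀ j : Fin (F.b 0), j = j₀ := by
    intro j
    apply Fin.ext
    have h1 : (j : ℕ) < 1 := lt_of_lt_of_le j.isLt (le_of_eq F.hb0)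
    have h2 : (j₀ : Fin (F.b 0)).val = 0 := rfl
    omega
  have hsum1 : ∀ w : Fin (F.b 0) → MvPolynomial (Fin 3) k, (∑ j, w j) = w j₀ := by
    intro w
    rw [show (Finset.univ : Finset (Fin (F.b 0))) = {j₀} from by
      ext j; simp [huniq j], Finset.sum_singleton]
  -- comparison maps in degree 0
  set ψ0 : Matrix (Fin 1) (Fin (F.b 0)) (MvPolynomial (Fin 3) k) := fun _ _ => 1 with hψ0
  set φ0 : Matrix (Fin (F.b 0)) (Fin 1) (MvPolynomial (Fin 3) k) := fun _ _ => 1 with hφ0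
  have hψφ0 : ψ0 * φ0 = 1 := by
    refine Matrix.ext fun s t => ?_
    rw [Matrix.mul_apply]
    rw [hsum1 (fun j => ψ0 s j * φ0 j t)]
    rw [show ψ0 s j₀ * φ0 j₀ t = 1 from by simp [hψ0, hφ0]]
    rw [Subsingleton.elim s t, Matrix.one_apply_eq]
  have gmψ0 : GradedMat ψ0 (fun _ => 0) (F.D 0) := by
    intro t s
    right
    refine ⟨Nat.zero_le _, ?_⟩
    rw [F.hD0 t]
    exact isHomogeneous_one _ _
  have gFA : ∀ i, GradedMat (F.A i) (F.D i) (F.D (i + 1)) := fun i t s => F.homog i s t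
  -- the entries of A 0 lie in I
  have hvalI : ∀ j : Fin (F.b 1), F.A 0 j₀ j ∈ Ideal.span (Set.range fun i => l * h i) := by
    intro j
    have hmem0 : F.A 0 j₀ j ∈ Submodule.map
        (LinearMap.proj (R := MvPolynomial (Fin 3) k)
          (φ := fun _ : Fin (F.b 0) => MvPolynomial (Fin 3) k) j₀)
        (LinearMap.range ((F.A 0).mulVecLin)) :=
      ⟨fun s => F.A 0 s j, col_mem_range _ _, rfl⟩
    rw [hj₀] at hmem0
    rw [F.augment] at hmem0
    rw [← hI]
    exact hmem0
  have hconstI : ∀ x : MvPolynomial (Fin 3) k, x ∈ Ideal.span (Set.range fun i => l * h i) →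
      (fun _ : Fin (F.b 0) => x) ∈ LinearMap.range (F.A 0).mulVecLin := by
    intro x hx
    rw [← hI] at hx
    have hx' : x ∈ Submodule.map
        (LinearMap.proj (R := MvPolynomial (Fin 3) k)
          (φ := fun _ : Fin (F.b 0) => MvPolynomial (Fin 3) k) ⟨0, F.hb0 ▸ Nat.zero_lt_one⟩)
        (LinearMap.range ((F.A 0).mulVecLin)) := by
      rw [F.augment]
      exact hx
    obtain ⟨y, hy, hyx⟩ := hx'
    have hxy : (fun _ : Fin (F.b 0) => x) = y := by
      funext j
      rw [huniq j]
      exact hyx.symm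
    rw [hxy]
    exact hy
  -- construction of the graded chain map Ψ : F → G
  have hΨ1 : ∃ Ψ1 : Matrix (Fin 3) (Fin (F.b 1)) (MvPolynomial (Fin 3) k), G1 l h * Ψ1 = ψ0 * F.A 0 ∧ GradedMat Ψ1 (fun _ => e + 1) (F.D 1) := by
    apply exists_graded_factor (gm1 hl hh) (F.D 1)
    intro j
    constructor
    · rw [col_mul]
      exact Hm.mulVec gmψ0 (gFA 0 j)
    · rw [col_mul]
      rw [mem_range_G1_iff]
      have hval : (ψ0.mulVec fun s => F.A 0 s j) 0 = F.A 0 j₀ j := by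
        rw [show (ψ0.mulVec fun s => F.A 0 s j) 0 = ∑ t, ψ0 0 t * F.A 0 t j from rfl]
        simp only [hψ0, one_mul]
        exact hsum1 _
      rw [hval]
      exact hvalI j
  obtain ⟨Ψ1, cψ1, gmΨ1⟩ := hΨ1
  -- level 2 of Ψ
  have hΨ2 : ∃ Ψ2 : Matrix (Fin 3) (Fin (F.b 2)) (MvPolynomial (Fin 3) k), G2 h * Ψ2 = Ψ1 * F.A 1 ∧ GradedMat Ψ2 (fun _ => 2 * e + 1) (F.D 2) := by
    apply exists_graded_factor (gm2 hh) (F.D 2)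
    intro j
    constructor
    · rw [col_mul]
      exact Hm.mulVec gmΨ1 (gFA 1 j)
    · rw [col_mul]
      have hker : (G1 l h).mulVec (Ψ1.mulVec fun s => F.A 1 s j) = 0 := by
        rw [Matrix.mulVec_mulVec, cψ1, ← Matrix.mulVec_mulVec]
        have hmem : (fun s => F.A 1 s j) ∈ LinearMap.range (F.A 1).mulVecLin :=
          col_mem_range _ _
        rw [F.exact 0, LinearMap.mem_ker, Matrix.mulVecLin_apply] at hmem
        rw [hmem, Matrix.mulVec_zero]
      obtain ⟨u, hu⟩ := E1core hl0 hne0 hr1 hr2 _ hker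
      exact ⟨u, by rw [Matrix.mulVecLin_apply]; exact hu⟩
  obtain ⟨Ψ2, cψ2, gmΨ2⟩ := hΨ2
  -- the key degree argument: Ψ₂ ∘ A₂ = 0
  have keyψ3 : Ψ2 * F.A 2 = 0 := by
    refine Matrix.ext fun s j => ?_
    have hcol : (fun s => (Ψ2 * F.A 2) s j) = 0 := by
      rw [col_mul]
      have hw : Hm (fun _ => 2 * e + 1) (F.D 3 j) (Ψ2.mulVec fun s => F.A 2 s j) :=
        Hm.mulVec gmΨ2 (gFA 2 j)
      have hker : (G2 h).mulVec (Ψ2.mulVec fun s => F.A 2 s j) = 0 := by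
        rw [Matrix.mulVec_mulVec, cψ2, ← Matrix.mulVec_mulVec]
        have hmem : (fun s => F.A 2 s j) ∈ LinearMap.range (F.A 2).mulVecLin :=
          col_mem_range _ _
        rw [F.exact 1, LinearMap.mem_ker, Matrix.mulVecLin_apply] at hmem
        rw [hmem, Matrix.mulVec_zero]
      obtain ⟨u, hu⟩ := E2core hne0 hr1 _ hker
      obtain ⟨v, hv, hveq⟩ := exists_graded_preimage (gm3 hh) hw
        ⟨u, by rw [Matrix.mulVecLin_apply]; exact hu⟩
      have hD3 : (F.D 3 j : ℤ) ≤ m + 3 := hF 3 j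
      have hlt : F.D 3 j < 3 * e + 1 := by
        have : (F.D 3 j : ℤ) < 3 * (e : ℤ) + 1 := by omega
        exact_mod_cast this
      have hv0 : v = 0 := by
        funext s'
        rcases hv s' with h0 | ⟨hle, _⟩
        · exact h0
        · exfalso
          have hle' : 3 * e + 1 ≤ F.D 3 j := hle
          omega
      rw [← hveq, hv0, Matrix.mulVec_zero]
    have := congrFun hcol s
    simpa using this
  -- construction of the chain map Φ : G → F (no grading needed)
  have hΦ1 : ∃ Φ1 : Matrix (Fin (F.b 1)) (Fin 3) (MvPolynomial (Fin 3) k), F.A 0 * Φ1 = φ0 * G1 l h := by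
    apply exists_factor
    intro j
    rw [col_mul]
    have hval : φ0.mulVec (fun s => G1 l h s j) = fun _ => G1 l h 0 j := by
      funext t
      rw [show φ0.mulVec (fun s => G1 l h s j) t = ∑ s : Fin 1, φ0 t s * G1 l h s j from rfl]
      rw [Fin.sum_univ_one]
      simp [hφ0]
    rw [hval]
    apply hconstI
    fin_cases j
    · exact Ideal.subset_span ⟨0, rfl⟩
    · exact Ideal.subset_span ⟨1, rfl⟩
    · exact Ideal.subset_span ⟨2, rfl⟩
  obtain ⟨Φ1, cφ1⟩ := hΦ1
  have hΦ2 : ∃ Φ2 : Matrix (Fin (F.b 2)) (Fin 3) (MvPolynomial (Fin 3) k), F.A 1 * Φ2 = Φ1 * G2 h := by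
    apply exists_factor
    intro j
    rw [col_mul]
    rw [F.exact 0, LinearMap.mem_ker, Matrix.mulVecLin_apply]
    rw [Matrix.mulVec_mulVec, cφ1, ← Matrix.mulVec_mulVec]
    have hz : (G1 l h).mulVec (fun s => G2 h s j) = 0 := by
      rw [col_eq_mulVec_single, Matrix.mulVec_mulVec, hG12, Matrix.zero_mulVec]
    rw [hz, Matrix.mulVec_zero]
  obtain ⟨Φ2, cφ2⟩ := hΦ2
  have hΦ3 : ∃ Φ3 : Matrix (Fin (F.b 3)) (Fin 1) (MvPolynomial (Fin 3) k), F.A 2 * Φ3 = Φ2 * G3 h := by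
    apply exists_factor
    intro j
    rw [col_mul]
    rw [F.exact 1, LinearMap.mem_ker, Matrix.mulVecLin_apply]
    rw [Matrix.mulVec_mulVec, cφ2, ← Matrix.mulVec_mulVec]
    have hz : (G2 h).mulVec (fun s => G3 h s j) = 0 := by
      rw [col_eq_mulVec_single, Matrix.mulVec_mulVec, hG23, Matrix.zero_mulVec]
    rw [hz, Matrix.mulVec_zero]
  obtain ⟨Φ3, cφ3⟩ := hΦ3
  -- homotopy construction on G
  have hH1 : ∃ H1 : Matrix (Fin 3) (Fin 3) (MvPolynomial (Fin 3) k), G2 h * H1 = Ψ1 * Φ1 - 1 := by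
    have hzero : G1 l h * (Ψ1 * Φ1 - 1) = 0 := by
      rw [Matrix.mul_sub, Matrix.mul_one, ← Matrix.mul_assoc, cψ1, Matrix.mul_assoc, cφ1,
        ← Matrix.mul_assoc, hψφ0, Matrix.one_mul, sub_self]
    apply exists_factor
    intro j
    have hker : (G1 l h).mulVec (fun s => (Ψ1 * Φ1 - 1 : Matrix (Fin 3) (Fin 3) (MvPolynomial (Fin 3) k)) s j) = 0 := by
      rw [col_eq_mulVec_single, Matrix.mulVec_mulVec, hzero, Matrix.zero_mulVec]
    obtain ⟨u, hu⟩ := E1core hl0 hne0 hr1 hr2 _ hker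
    exact ⟨u, by rw [Matrix.mulVecLin_apply]; exact hu⟩
  obtain ⟨H1, cH1⟩ := hH1
  have hH2 : ∃ H2 : Matrix (Fin 1) (Fin 3) (MvPolynomial (Fin 3) k), G3 h * H2 = (Ψ2 * Φ2 - 1) - H1 * G2 h := by
    have hzero : G2 h * ((Ψ2 * Φ2 - 1) - H1 * G2 h) = 0 := by
      have e1 : G2 h * (Ψ2 * Φ2) = (Ψ1 * Φ1) * G2 h := by
        rw [← Matrix.mul_assoc, cψ2, Matrix.mul_assoc, cφ2, ← Matrix.mul_assoc]
      have e2 : G2 h * (H1 * G2 h) = (Ψ1 * Φ1) * G2 h - 1 * G2 h := by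
        rw [← Matrix.mul_assoc, cH1, Matrix.sub_mul]
      rw [Matrix.mul_sub, Matrix.mul_sub, Matrix.mul_one, e1, e2]
      rw [Matrix.one_mul]
      abel
    apply exists_factor
    intro j
    have hker : (G2 h).mulVec (fun s => ((Ψ2 * Φ2 - 1) - H1 * G2 h : Matrix (Fin 3) (Fin 3) (MvPolynomial (Fin 3) k)) s j) = 0 := by
      rw [col_eq_mulVec_single, Matrix.mulVec_mulVec, hzero, Matrix.zero_mulVec]
    obtain ⟨u, hu⟩ := E2core hne0 hr1 _ hker
    exact ⟨u, by rw [Matrix.mulVecLin_apply]; exact hu⟩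
  obtain ⟨H2, cH2⟩ := hH2
  -- the contradiction
  have hfin : G3 h * (-1 - H2 * G3 h) = 0 := by
    have e1 : G3 h * (H2 * G3 h) = ((Ψ2 * Φ2 - 1) - H1 * G2 h) * G3 h := by
      rw [← Matrix.mul_assoc, cH2]
    have e2 : (Ψ2 * Φ2) * G3 h = 0 := by
      rw [Matrix.mul_assoc, ← cφ3, ← Matrix.mul_assoc, keyψ3, Matrix.zero_mul]
    have e3 : (H1 * G2 h) * G3 h = 0 := by
      rw [Matrix.mul_assoc, hG23, Matrix.mul_zero]
    rw [Matrix.mul_sub, e1, Matrix.sub_mul, Matrix.sub_mul, e2, e3, Matrix.one_mul,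
      Matrix.mul_neg, Matrix.mul_one]
    abel
  have hmat : H2 * G3 h = -1 := by
    have hz : -1 - H2 * G3 h = (0 : Matrix (Fin 1) (Fin 1) (MvPolynomial (Fin 3) k)) := by
      refine Matrix.ext fun s j => ?_
      have hcol := E3core hne0 (fun s => (-1 - H2 * G3 h : Matrix (Fin 1) (Fin 1) (MvPolynomial (Fin 3) k)) s j) ?_
      · have := congrFun hcol s
        simpa using this
      · rw [col_eq_mulVec_single, Matrix.mulVec_mulVec, hfin, Matrix.zero_mulVec]
    have := sub_eq_zero.mp hz
    exact this.symm
  have hentry := congrFun (congrFun hmat 0) 0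
  rw [Matrix.mul_apply, Fin.sum_univ_three] at hentry
  have hG3entries : G3 h 0 0 = h 2 ∧ G3 h 1 0 = -h 1 ∧ G3 h 2 0 = h 0 := ⟨rfl, rfl, rfl⟩
  rw [hG3entries.1, hG3entries.2.1, hG3entries.2.2] at hentry
  have hneg : ((-1 : Matrix (Fin 1) (Fin 1) (MvPolynomial (Fin 3) k)) 0 0)
      = -(1 : MvPolynomial (Fin 3) k) := by
    simp [Matrix.neg_apply, Matrix.one_apply_eq]
  rw [hneg] at hentry
  have cc0 : ∀ i, constantCoeff (h i) = (0 : k) := by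
    intro i
    rw [constantCoeff_eq]
    apply (hh i).coeff_eq_zero
    rw [map_zero]
    omega
  have hC := congrArg constantCoeff hentry
  simp only [map_add, map_mul, map_neg, map_one, cc0, neg_zero, mul_zero, add_zero, zero_add] at hC
  exact one_ne_zero (neg_eq_zero.mp hC.symm)
end Lower

/-- Let `R = k[x₀,x₁,x₂]` and `I = l·H`, where `l` is a (nonzero) linear
form and `H` is generated by a regular sequence of `3` forms each of degree `d₁ - 1`
(with `d₁ ≥ 2`). Then `reg (R/I) = 3 d₁ - 5`. -/
theorem reg_of_linear_times_complete_intersection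
    (d₁ : ℕ) (hd₁ : 2 ≤ d₁)
    (l : MvPolynomial (Fin 3) k) (hl : l.IsHomogeneous 1) (hl0 : l ≠ 0)
    (h : Fin 3 → MvPolynomial (Fin 3) k)
    (hh : ∀ i, (h i).IsHomogeneous (d₁ - 1))
    (hreg : RingTheory.Sequence.IsRegular (MvPolynomial (Fin 3) k) (List.ofFn h))
    (H I : Ideal (MvPolynomial (Fin 3) k))
    (hH : H = Ideal.span (Set.range h))
    (hI : I = Ideal.span {l} * H) :
    regQuot (n := 2) I = 3 * (d₁ : ℤ) - 5 := by

  have he : 1 ≤ d₁ - 1 := by omega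
  have hne0 := hfact0 hreg
  have hr1 := hfact1 hreg
  have hr2 := hfact2 hreg
  have hIJ : I = Ideal.span (Set.range fun i => l * h i) := by
    rw [hI, hH, span_lh_eq]
  have hcast : 3 * ((d₁ - 1 : ℕ) : ℤ) - 2 = 3 * (d₁ : ℤ) - 5 := by
    have : ((d₁ - 1 : ℕ) : ℤ) = (d₁ : ℤ) - 1 := by
      push_cast [Nat.cast_sub (by omega : 1 ≤ d₁)]
      ring
    rw [this]; ring
  have hup : regQuotLE (n := 2) I (3 * (d₁ : ℤ) - 5) := by
    rw [← hcast]
    exact upper_bound he hl hh hl0 hne0 hr1 hr2 I hIJ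
  have hlow : ∀ m ∈ {m : ℤ | regQuotLE (n := 2) I m}, 3 * (d₁ : ℤ) - 5 ≤ m := by
    intro m hm
    rw [← hcast]
    exact lower_bound he hl hh hl0 hne0 hr1 hr2 I hIJ m hm
  show sInf {m : ℤ | regQuotLE (n := 2) I m} = 3 * (d₁ : ℤ) - 5
  exact IsLeast.csInf_eq ⟨hup, hlow⟩

end RegHelpers2
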